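/- Let ρ > 0 and let H ∈ ℂ^{N×M} have columns h_1,…,h_M; for j ∈ {1,…,M} let H_j ∈ ℂ^{N×(M−1)} be H with its j-th column removed and Q_j = (ρ I_N + H_j H_j^H)^{-1}. Then the (j,j) entry of (ρ I_M + H^H H)^{-1} equals 1/(ρ (1 + h_j^H Q_j h_j)). -/

import Mathlib

noncomputable section

open MeasureTheory ProbabilityTheory Matrix Filter Finset
open scoped ENNReal NNReal Matrix BoundedContinuousFunction Topology ComplexOrder

namespace HoloMIMO

variable {Ω : Type*} [MeasurableSpace Ω]

/-- Spectral (ℓ²→ℓ²) operator norm of a complex rectangular matrix. -/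
def specNorm {m n : ℕ} (A : Matrix (Fin m) (Fin n) ℂ) : ℝ :=
  ‖LinearMap.toContinuousLinearMap (Matrix.toEuclideanLin A)‖

/-- Squared Euclidean norm of a complex vector. -/
def vecNormSq {n : ℕ} (a : Fin n → ℂ) : ℝ := ∑ i, Complex.normSq (a i)

/-- The sesquilinear form `aᴴ B b`. -/
def bilin {n : ℕ} (B : Matrix (Fin n) (Fin n) ℂ) (a b : Fin n → ℂ) : ℂ :=
  dotProduct (star a) (B.mulVec b)

/-- The quadratic form `aᴴ B a`. -/
def quad {n : ℕ} (B : Matrix (Fin n) (Fin n) ℂ) (a : Fin n → ℂ) : ℂ := bilin B a a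

/-- The `k`-th column of a matrix, as a vector. -/
def colv {m : ℕ} {n : Type*} (A : Matrix (Fin m) n ℂ) (k : n) : Fin m → ℂ := fun i => A i k

/-- Entrywise square root of a real matrix, viewed as a complex matrix. -/
def entrySqrt {m n : ℕ} (S : Matrix (Fin m) (Fin n) ℝ) : Matrix (Fin m) (Fin n) ℂ :=
  Matrix.of fun i j => (Real.sqrt (S i j) : ℂ)

/-- The channel `H = A + Σ^{∘1/2} ⊙ X`. -/
def chan {N M : ℕ} (A : Matrix (Fin N) (Fin M) ℂ) (S : Matrix (Fin N) (Fin M) ℝ)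
    (X : Matrix (Fin N) (Fin M) ℂ) : Matrix (Fin N) (Fin M) ℂ :=
  A + Matrix.hadamard (entrySqrt S) X

/-- `D_j` : the N×N diagonal matrix with the `j`-th column of `Σ` on the diagonal. -/
def Dcol {N M : ℕ} (S : Matrix (Fin N) (Fin M) ℝ) (j : Fin M) : Matrix (Fin N) (Fin N) ℂ :=
  Matrix.diagonal fun i => (S i j : ℂ)

/-- `D̃_i` : the M×M diagonal matrix with the `i`-th row of `Σ` on the diagonal. -/
def Drow {N M : ℕ} (S : Matrix (Fin N) (Fin M) ℝ) (i : Fin N) : Matrix (Fin M) (Fin M) ℂ :=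
  Matrix.diagonal fun j => (S i j : ℂ)

/-- The resolvent `Q = (ρ I_N + H Hᴴ)⁻¹`. -/
def Qmat {N : ℕ} {m : Type*} [Fintype m] (ρ : ℝ) (H : Matrix (Fin N) m ℂ) :
    Matrix (Fin N) (Fin N) ℂ :=
  ((ρ : ℂ) • (1 : Matrix (Fin N) (Fin N) ℂ) + H * Hᴴ)⁻¹

/-- The co-resolvent `Q̃ = (ρ I_M + Hᴴ H)⁻¹`. -/
def Qtmat {N M : ℕ} (ρ : ℝ) (H : Matrix (Fin N) (Fin M) ℂ) : Matrix (Fin M) (Fin M) ℂ :=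
  ((ρ : ℂ) • (1 : Matrix (Fin M) (Fin M) ℂ) + Hᴴ * H)⁻¹

/-- `H` with its `j`-th column deleted (columns indexed by the remaining column indices). -/
def delCol {N M : ℕ} (H : Matrix (Fin N) (Fin M) ℂ) (j : Fin M) :
    Matrix (Fin N) {k : Fin M // k ≠ j} ℂ :=
  Matrix.of fun i k => H i k.1

/-- The rank-one-perturbed resolvent `Q_j = (ρ I_N + H_j H_jᴴ)⁻¹`. -/
def Qjmat {N M : ℕ} (ρ : ℝ) (H : Matrix (Fin N) (Fin M) ℂ) (j : Fin M) :
    Matrix (Fin N) (Fin N) ℂ :=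
  Qmat ρ (delCol H j)

/-- Mutual information `C(ρ) = log det(I + ρ⁻¹ H Hᴴ)`. -/
def MI {N M : ℕ} (ρ : ℝ) (H : Matrix (Fin N) (Fin M) ℂ) : ℝ :=
  Real.log ‖(1 + (ρ : ℂ)⁻¹ • (H * Hᴴ)).det‖

/-- `ψ = diag((ρ(1+δ̃_i))⁻¹)`. -/
def psiMat {N : ℕ} (ρ : ℝ) (δt : Fin N → ℝ) : Matrix (Fin N) (Fin N) ℂ :=
  Matrix.diagonal fun i => (((ρ * (1 + δt i))⁻¹ : ℝ) : ℂ)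

/-- `ψ̃ = diag((ρ(1+δ_j))⁻¹)`. -/
def psitMat {M : ℕ} (ρ : ℝ) (δ : Fin M → ℝ) : Matrix (Fin M) (Fin M) ℂ :=
  Matrix.diagonal fun j => (((ρ * (1 + δ j))⁻¹ : ℝ) : ℂ)

/-- `T = (ψ⁻¹ + ρ A ψ̃ Aᴴ)⁻¹`. -/
def Tmat {N M : ℕ} (ρ : ℝ) (A : Matrix (Fin N) (Fin M) ℂ) (δ : Fin M → ℝ) (δt : Fin N → ℝ) :
    Matrix (Fin N) (Fin N) ℂ :=
  ((psiMat ρ δt)⁻¹ + (ρ : ℂ) • (A * psitMat ρ δ * Aᴴ))⁻¹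

/-- `T̃ = (ψ̃⁻¹ + ρ Aᴴ ψ A)⁻¹`. -/
def Ttmat {N M : ℕ} (ρ : ℝ) (A : Matrix (Fin N) (Fin M) ℂ) (δ : Fin M → ℝ) (δt : Fin N → ℝ) :
    Matrix (Fin M) (Fin M) ℂ :=
  ((psitMat ρ δ)⁻¹ + (ρ : ℂ) • (Aᴴ * psiMat ρ δt * A))⁻¹

/-- `(δ, δ̃)` is a (the) nonnegative solution of the canonical system of `M + N` equations
`δ_j = (1/M) Tr(D_j T)`, `δ̃_i = (1/M) Tr(D̃_i T̃)`. -/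
def DESolution {N M : ℕ} (ρ : ℝ) (A : Matrix (Fin N) (Fin M) ℂ) (S : Matrix (Fin N) (Fin M) ℝ)
    (δ : Fin M → ℝ) (δt : Fin N → ℝ) : Prop :=
  (∀ j, 0 ≤ δ j) ∧ (∀ i, 0 ≤ δt i) ∧
  (∀ j, (δ j : ℂ) = (M : ℂ)⁻¹ * (Dcol S j * Tmat ρ A δ δt).trace) ∧
  (∀ i, (δt i : ℂ) = (M : ℂ)⁻¹ * (Drow S i * Ttmat ρ A δ δt).trace)

/-- `t̃_{jj}`, the `j`-th diagonal entry of `T̃` (a real number). -/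
def ttdiag {N M : ℕ} (ρ : ℝ) (A : Matrix (Fin N) (Fin M) ℂ) (δ : Fin M → ℝ) (δt : Fin N → ℝ)
    (j : Fin M) : ℝ := (Ttmat ρ A δ δt j j).re

/-- `Π_{jk} = a_kᴴ T D_j T a_k / (M (1+δ_k)²)`. -/
def PiMat {N M : ℕ} (ρ : ℝ) (A : Matrix (Fin N) (Fin M) ℂ) (S : Matrix (Fin N) (Fin M) ℝ)
    (δ : Fin M → ℝ) (δt : Fin N → ℝ) : Matrix (Fin M) (Fin M) ℝ :=
  Matrix.of fun j k =>
    (bilin (Tmat ρ A δ δt * Dcol S j * Tmat ρ A δ δt) (colv A k) (colv A k)).re /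
      (M * (1 + δ k) ^ 2)

/-- `Ξ_{jk} = (a_kᴴ T a_j)(a_jᴴ T a_k)/((1+δ_j)²(1+δ_k)²)` for `j ≠ k`, and `Ξ_{jj} = 0`. -/
def XiMat {N M : ℕ} (ρ : ℝ) (A : Matrix (Fin N) (Fin M) ℂ) (δ : Fin M → ℝ) (δt : Fin N → ℝ) :
    Matrix (Fin M) (Fin M) ℝ :=
  Matrix.of fun j k =>
    if j = k then 0 else
      ((bilin (Tmat ρ A δ δt) (colv A k) (colv A j)) *
        (bilin (Tmat ρ A δ δt) (colv A j) (colv A k))).re /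
        ((1 + δ j) ^ 2 * (1 + δ k) ^ 2)

/-- `Γ_{jk} = Tr(D_j T D_k T)/M²`. -/
def GammaMat {N M : ℕ} (ρ : ℝ) (A : Matrix (Fin N) (Fin M) ℂ) (S : Matrix (Fin N) (Fin M) ℝ)
    (δ : Fin M → ℝ) (δt : Fin N → ℝ) : Matrix (Fin M) (Fin M) ℝ :=
  Matrix.of fun j k =>
    ((Dcol S j * Tmat ρ A δ δt * Dcol S k * Tmat ρ A δ δt).trace).re / (M : ℝ) ^ 2

/-- `Λ̃ = ρ² diag(t̃_{11}², …, t̃_{MM}²)`. -/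
def LambdaMat {N M : ℕ} (ρ : ℝ) (A : Matrix (Fin N) (Fin M) ℂ) (δ : Fin M → ℝ)
    (δt : Fin N → ℝ) : Matrix (Fin M) (Fin M) ℝ :=
  Matrix.diagonal fun j => ρ ^ 2 * (ttdiag ρ A δ δt j) ^ 2

/-- The 2M×2M block matrix `B_M = [[Π, Γ], [Ξ + Λ̃, Πᵀ]]`. -/
def BMat {N M : ℕ} (ρ : ℝ) (A : Matrix (Fin N) (Fin M) ℂ) (S : Matrix (Fin N) (Fin M) ℝ)
    (δ : Fin M → ℝ) (δt : Fin N → ℝ) : Matrix (Fin M ⊕ Fin M) (Fin M ⊕ Fin M) ℝ :=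
  Matrix.fromBlocks (PiMat ρ A S δ δt) (GammaMat ρ A S δ δt)
    (XiMat ρ A δ δt + LambdaMat ρ A δ δt) (PiMat ρ A S δ δt)ᵀ

/-- `V_M(ρ) = − log det(I_{2M} − B_M)`. -/
def VM {N M : ℕ} (ρ : ℝ) (A : Matrix (Fin N) (Fin M) ℂ) (S : Matrix (Fin N) (Fin M) ℝ)
    (δ : Fin M → ℝ) (δt : Fin N → ℝ) : ℝ :=
  - Real.log ((1 - BMat ρ A S δ δt).det)

/-- The entries of `X` are independent circularly-symmetric complex Gaussians: real and
imaginary parts of all entries are jointly independent, each centered Gaussian with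
variance `v`. -/
def IIDcgauss {N M : ℕ} (μ : Measure Ω) (X : Ω → Matrix (Fin N) (Fin M) ℂ) (v : ℝ≥0) : Prop :=
  (∀ i j, Measure.map (fun ω => (X ω i j).re) μ = gaussianReal 0 v ∧
      Measure.map (fun ω => (X ω i j).im) μ = gaussianReal 0 v) ∧
  iIndepFun
    (fun (p : (Fin N × Fin M) × Bool) ω =>
      if p.2 then (X ω p.1.1 p.1.2).re else (X ω p.1.1 p.1.2).im) μ

/-- The entries of the vector `x` are independent circularly-symmetric complex Gaussians,
the real and imaginary part of each entry being centered Gaussian of variance `v`. -/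
def IIDcgaussVec {N : ℕ} (μ : Measure Ω) (x : Ω → Fin N → ℂ) (v : ℝ≥0) : Prop :=
  (∀ i, Measure.map (fun ω => (x ω i).re) μ = gaussianReal 0 v ∧
      Measure.map (fun ω => (x ω i).im) μ = gaussianReal 0 v) ∧
  iIndepFun
    (fun (p : Fin N × Bool) ω => if p.2 then (x ω p.1).re else (x ω p.1).im) μ

/-- `F_j` : the σ-field generated by the columns of `X` of index `≥ j`. -/
def colSigma {N M : ℕ} (X : Ω → Matrix (Fin N) (Fin M) ℂ) (j : ℕ) : MeasurableSpace Ω :=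
  MeasurableSpace.comap
    (fun ω => fun p : {k : Fin M // j ≤ (k : ℕ)} × Fin N => X ω p.2 p.1.1) inferInstance

/-- The random variable `ζ_j`. -/
def zeta {N M : ℕ} (ρ : ℝ) (A : Matrix (Fin N) (Fin M) ℂ) (S : Matrix (Fin N) (Fin M) ℝ)
    (H : Matrix (Fin N) (Fin M) ℂ) (j : Fin M) : ℝ :=
  ((quad (Qjmat ρ H j) (colv H j)).re - (M : ℝ)⁻¹ * ((Dcol S j * Qjmat ρ H j).trace).re -
      (quad (Qjmat ρ H j) (colv A j)).re) /
    (1 + (M : ℝ)⁻¹ * ((Dcol S j * Qjmat ρ H j).trace).re + (quad (Qjmat ρ H j) (colv A j)).re)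

/-- The random variable `e_j = h_jᴴ Q_j h_j − a_jᴴ Q_j a_j − (1/M) Tr(D_j Q_j)`. -/
def eQ {N M : ℕ} (ρ : ℝ) (A : Matrix (Fin N) (Fin M) ℂ) (S : Matrix (Fin N) (Fin M) ℝ)
    (H : Matrix (Fin N) (Fin M) ℂ) (j : Fin M) : ℝ :=
  (quad (Qjmat ρ H j) (colv H j)).re - (quad (Qjmat ρ H j) (colv A j)).re -
    (M : ℝ)⁻¹ * ((Dcol S j * Qjmat ρ H j).trace).re

/-- Entrywise conditional expectation of a random matrix. -/
def condexpMat {N : ℕ} (μ : Measure Ω) (m : MeasurableSpace Ω)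
    (F : Ω → Matrix (Fin N) (Fin N) ℂ) : Ω → Matrix (Fin N) (Fin N) ℂ :=
  fun ω => Matrix.of fun i i' => (μ[(fun ω' => F ω' i i') | m]) ω

/-- A sequence (indexed by the number `M` of transmit antennas) of non-centered
non-separable Gaussian MIMO models satisfying assumptions (A.1)–(A.3). -/
structure SeqModel (Ω : Type*) [MeasurableSpace Ω] (μ : Measure Ω) where
  /-- `ρ > 0` is the fixed noise level (inverse SNR). -/
  ρ : ℝ
  hρ : 0 < ρ
  /-- number of receive antennas as a function of `M` -/
  N : ℕ → ℕ
  hN : Tendsto N atTop atTop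
  /-- LoS components -/
  A : ∀ M : ℕ, Matrix (Fin (N M)) (Fin M) ℂ
  /-- variance profiles -/
  S : ∀ M : ℕ, Matrix (Fin (N M)) (Fin M) ℝ
  /-- random matrices -/
  X : ∀ M : ℕ, Ω → Matrix (Fin (N M)) (Fin M) ℂ
  measX : ∀ M i j, Measurable fun ω => X M ω i j
  gaussX : ∀ M : ℕ, 1 ≤ M → IIDcgauss μ (X M) (M : ℝ≥0)⁻¹
  /-- (A.1) -/
  c₁ : ℝ
  c₂ : ℝ
  hc₁ : 0 < c₁
  hA1 : ∀ᶠ M : ℕ in atTop, c₁ ≤ (M : ℝ) / (N M : ℝ) ∧ (M : ℝ) / (N M : ℝ) ≤ c₂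
  /-- (A.2) -/
  σmin : ℝ
  σmax : ℝ
  hσmin : 0 < σmin
  hA2 : ∀ M i j, σmin ≤ S M i j ∧ S M i j ≤ σmax
  /-- (A.3) -/
  amax : ℝ
  hA3 : ∀ M, specNorm (A M) ≤ amax

variable {μ : Measure Ω}

/-- The random channel of the `M`-th model. -/
def SeqModel.H (m : SeqModel Ω μ) (M : ℕ) (ω : Ω) : Matrix (Fin (m.N M)) (Fin M) ℂ :=
  chan (m.A M) (m.S M) (m.X M ω)

/-- The mutual information of the `M`-th model. -/
def SeqModel.C (m : SeqModel Ω μ) (M : ℕ) (ω : Ω) : ℝ := MI m.ρ (m.H M ω)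

/-- The martingale increment `γ_j = E_j[log(1+ζ_j)] − E_{j+1}[log(1+ζ_j)]`. -/
def SeqModel.gamma (m : SeqModel Ω μ) (M : ℕ) (j : Fin M) : Ω → ℝ := fun ω =>
  ((μ[(fun ω' => Real.log (1 + zeta m.ρ (m.A M) (m.S M) (m.H M ω') j)) |
      colSigma (m.X M) (j : ℕ)]) ω) -
  ((μ[(fun ω' => Real.log (1 + zeta m.ρ (m.A M) (m.S M) (m.H M ω') j)) |
      colSigma (m.X M) ((j : ℕ) + 1)]) ω)



section Statements

variable [IsProbabilityMeasure μ]


section Stmt8Aux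

open scoped ComplexOrder

private lemma aux_posDef_left {n : ℕ} {ι : Type*} [Fintype ι] {ρ : ℝ} (hρ : 0 < ρ)
    (A : Matrix (Fin n) ι ℂ) :
    ((ρ : ℂ) • (1 : Matrix (Fin n) (Fin n) ℂ) + A * Aᴴ).PosDef := by
  have h1 : ((ρ : ℂ) • (1 : Matrix (Fin n) (Fin n) ℂ)).PosDef := by
    rw [Matrix.smul_one_eq_diagonal]
    exact Matrix.posDef_diagonal_iff.mpr fun i => by positivity
  exact h1.add_posSemidef (Matrix.posSemidef_self_mul_conjTranspose A)

private lemma aux_posDef_right {n : ℕ} {ι : Type*} [Fintype ι] [DecidableEq ι] {ρ : ℝ}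
    (hρ : 0 < ρ) (A : Matrix (Fin n) ι ℂ) :
    ((ρ : ℂ) • (1 : Matrix ι ι ℂ) + Aᴴ * A).PosDef := by
  have h1 : ((ρ : ℂ) • (1 : Matrix ι ι ℂ)).PosDef := by
    rw [Matrix.smul_one_eq_diagonal]
    exact Matrix.posDef_diagonal_iff.mpr fun i => by positivity
  exact h1.add_posSemidef (Matrix.posSemidef_conjTranspose_mul_self A)

private lemma aux_sylvester {n : ℕ} {ι : Type*} [Fintype ι] [DecidableEq ι] {ρ : ℂ}
    (hρ : ρ ≠ 0) (A : Matrix (Fin n) ι ℂ) :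
    ρ ^ n * ((ρ • (1 : Matrix ι ι ℂ) + Aᴴ * A)).det =
      ρ ^ (Fintype.card ι) * ((ρ • (1 : Matrix (Fin n) (Fin n) ℂ) + A * Aᴴ)).det := by
  have e1 : ρ • (1 : Matrix ι ι ℂ) + Aᴴ * A = ρ • (1 + Aᴴ * (ρ⁻¹ • A)) := by
    rw [smul_add, Matrix.mul_smul, smul_smul, mul_inv_cancel₀ hρ, one_smul]
  have e2 : ρ • (1 : Matrix (Fin n) (Fin n) ℂ) + A * Aᴴ = ρ • (1 + (ρ⁻¹ • A) * Aᴴ) := by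
    rw [smul_add, Matrix.smul_mul, smul_smul, mul_inv_cancel₀ hρ, one_smul]
  rw [e1, e2, Matrix.det_smul, Matrix.det_smul, Matrix.det_one_add_mul_comm, Fintype.card_fin]
  ring

/-- The equivalence `{k ≠ j} ⊕ Unit ≃ Fin M`. -/
private def auxEqv {M : ℕ} (j : Fin M) : {k : Fin M // k ≠ j} ⊕ Unit ≃ Fin M where
  toFun := Sum.elim Subtype.val fun _ => j
  invFun k := if h : k = j then Sum.inr () else Sum.inl ⟨k, h⟩
  left_inv x := by
    rcases x with ⟨k, hk⟩ | u
    · simp [hk]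
    · simp
  right_inv k := by
    by_cases h : k = j <;> simp [h]

private lemma aux_cofactor {M : ℕ} (G : Matrix (Fin M) (Fin M) ℂ) (j : Fin M)
    (G₁ : Matrix {k : Fin M // k ≠ j} {k : Fin M // k ≠ j} ℂ)
    (hG₁ : ∀ k k', G₁ k k' = G k.1 k'.1) :
    G.adjugate j j = G₁.det := by
  rw [Matrix.adjugate_apply, ← Matrix.det_submatrix_equiv_self (auxEqv j)]
  have : (G.updateRow j (Pi.single j 1)).submatrix (auxEqv j) (auxEqv j) =
      Matrix.fromBlocks G₁ (Matrix.of fun k _ => G k.1 j) 0 1 := by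
    ext a b
    rcases a with ⟨k, hk⟩ | u <;> rcases b with ⟨k', hk'⟩ | u'
    · simp [auxEqv, Matrix.updateRow_apply, hk, hG₁]
    · simp [auxEqv, Matrix.updateRow_apply, hk]
    · simp [auxEqv, Matrix.updateRow_apply, Pi.single_apply, hk']
    · simp [auxEqv, Pi.single_apply]
  rw [this, Matrix.det_fromBlocks_zero₂₁, Matrix.det_one, mul_one]

private lemma aux_sum_split {M : ℕ} (j : Fin M) (f : Fin M → ℂ) :
    ∑ k, f k = f j + ∑ k : {k : Fin M // k ≠ j}, f k.1 := by
  rw [← Finset.add_sum_erase _ f (Finset.mem_univ j)]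
  congr 1
  exact Finset.sum_subtype (Finset.univ.erase j) (fun x => by simp [Finset.mem_erase]) f

private lemma aux_split_rankone {N M : ℕ} (ρ : ℝ) (H : Matrix (Fin N) (Fin M) ℂ) (j : Fin M) :
    (ρ : ℂ) • (1 : Matrix (Fin N) (Fin N) ℂ) + H * Hᴴ =
      ((ρ : ℂ) • (1 : Matrix (Fin N) (Fin N) ℂ) + delCol H j * (delCol H j)ᴴ) +
        Matrix.replicateCol Unit (colv H j) * Matrix.replicateRow Unit (star (colv H j)) := by
  ext i i'
  simp only [Matrix.add_apply, Matrix.mul_apply, Matrix.conjTranspose_apply, Matrix.replicateCol_apply,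
    Matrix.replicateRow_apply, delCol, colv, Matrix.of_apply, Finset.univ_unique, Finset.sum_const,
    Finset.card_singleton, one_smul, Pi.star_apply]
  rw [aux_sum_split j (fun k => H i k * star (H i' k))]
  ring

private lemma aux_onebyone_det {N : ℕ} (B : Matrix (Fin N) (Fin N) ℂ) (u v : Fin N → ℂ) :
    (1 + Matrix.replicateRow Unit v * B * Matrix.replicateCol Unit u).det = 1 + v ⬝ᵥ B.mulVec u := by
  rw [Matrix.det_unique]
  simp only [Matrix.add_apply, Matrix.one_apply_eq, Matrix.mul_apply, Matrix.replicateRow_apply,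
    Matrix.replicateCol_apply, dotProduct, Matrix.mulVec, dotProduct]
  congr 1
  simp_rw [Finset.sum_mul, Finset.mul_sum, mul_assoc]
  rw [Finset.sum_comm]

end Stmt8Aux

/-- diagonal entries of the co-resolvent. -/
theorem stmt8_coresolvent_diagonal_entry
    {N M : ℕ} (ρ : ℝ) (hρ : 0 < ρ) (H : Matrix (Fin N) (Fin M) ℂ) (j : Fin M) :
    Qtmat ρ H j j = ((ρ : ℂ) * (1 + quad (Qjmat ρ H j) (colv H j)))⁻¹ := by
  classical
  have hρ0 : (ρ : ℂ) ≠ 0 := by exact_mod_cast hρ.ne'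
  set Hj := delCol H j with hHj
  set B : Matrix (Fin N) (Fin N) ℂ := (ρ : ℂ) • 1 + Hj * Hjᴴ with hB
  set h : Fin N → ℂ := colv H j with hh
  set q : ℂ := star h ⬝ᵥ B⁻¹.mulVec h with hqdef
  have hquad : quad (Qjmat ρ H j) (colv H j) = q := rfl
  set G : Matrix (Fin M) (Fin M) ℂ := (ρ : ℂ) • 1 + Hᴴ * H with hG
  set G₁ : Matrix {k : Fin M // k ≠ j} {k : Fin M // k ≠ j} ℂ :=
    (ρ : ℂ) • 1 + Hjᴴ * Hj with hG1
  have pdG : G.PosDef := aux_posDef_right hρ H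
  have pdG₁ : G₁.PosDef := aux_posDef_right hρ Hj
  have pdB : B.PosDef := aux_posDef_left hρ Hj
  have hGdet : G.det ≠ 0 := pdG.det_pos.ne'
  have hentry : ∀ k k' : {k : Fin M // k ≠ j}, G₁ k k' = G k.1 k'.1 := by
    intro k k'
    simp only [hG1, hG, hHj, Matrix.add_apply, Matrix.smul_apply, Matrix.mul_apply,
      Matrix.one_apply, Matrix.conjTranspose_apply, delCol, Matrix.of_apply,
      Subtype.ext_iff]
  have hadj : G.adjugate j j = G₁.det := aux_cofactor G j G₁ hentry
  have hQt : Qtmat ρ H j j = G.det⁻¹ * G₁.det := by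
    show (G⁻¹) j j = _
    rw [Matrix.inv_def, Matrix.smul_apply, hadj, Ring.inverse_eq_inv', smul_eq_mul]
  have h1 : (ρ : ℂ) ^ N * G₁.det =
      (ρ : ℂ) ^ (Fintype.card {k : Fin M // k ≠ j}) * B.det := aux_sylvester hρ0 Hj
  have hdetBH : ((ρ : ℂ) • (1 : Matrix (Fin N) (Fin N) ℂ) + H * Hᴴ).det =
      B.det * (1 + q) := by
    rw [aux_split_rankone ρ H j, ← hHj, ← hB,
      Matrix.det_add_replicateCol_mul_replicateRow pdB.det_pos.ne'.isUnit, aux_onebyone_det,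
      hqdef, hh]
  have h2 : (ρ : ℂ) ^ N * G.det = (ρ : ℂ) ^ M * (B.det * (1 + q)) := by
    have hs := aux_sylvester hρ0 H
    rw [Fintype.card_fin] at hs
    rw [hG, hs, hdetBH]
  have hc : Fintype.card {k : Fin M // k ≠ j} + 1 = M := by
    have h3 : Fintype.card {k : Fin M // ¬ k = j} =
        Fintype.card (Fin M) - Fintype.card {k : Fin M // k = j} :=
      Fintype.card_subtype_compl _
    have h4 : Fintype.card {k : Fin M // k = j} = 1 := Fintype.card_subtype_eq j
    have h5 : 0 < M := j.pos
    simp only [Fintype.card_fin, h4] at h3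
    have h6 : Fintype.card {k : Fin M // k ≠ j} = Fintype.card {k : Fin M // ¬ k = j} := rfl
    omega
  have key : (ρ : ℂ) ^ N * (G₁.det * ((ρ : ℂ) * (1 + q))) = (ρ : ℂ) ^ N * G.det := by
    calc (ρ : ℂ) ^ N * (G₁.det * ((ρ : ℂ) * (1 + q)))
        = ((ρ : ℂ) ^ N * G₁.det) * ((ρ : ℂ) * (1 + q)) := by ring
      _ = ((ρ : ℂ) ^ (Fintype.card {k : Fin M // k ≠ j}) * B.det) * ((ρ : ℂ) * (1 + q)) := by
          rw [h1]
      _ = ((ρ : ℂ) ^ (Fintype.card {k : Fin M // k ≠ j}) * (ρ : ℂ)) * (B.det * (1 + q)) := by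
          ring
      _ = (ρ : ℂ) ^ M * (B.det * (1 + q)) := by rw [← pow_succ, hc]
      _ = (ρ : ℂ) ^ N * G.det := h2.symm
  have key' : G₁.det * ((ρ : ℂ) * (1 + q)) = G.det :=
    mul_left_cancel₀ (pow_ne_zero N hρ0) key
  have hne : (ρ : ℂ) * (1 + q) ≠ 0 := by
    intro h0
    rw [h0, mul_zero] at key'
    exact hGdet key'.symm
  rw [hQt, hquad]
  have hq1 : 1 + q ≠ 0 := right_ne_zero_of_mul hne
  field_simp
  linear_combination key'


end Statements

end HoloMIMO
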